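/- Let k be a field of characteristic p > 2. In the algebra S = k⟨x,y⟩/(yx − xy − (1/2)x²), for all r, ℓ ≥ 0: y^r x^ℓ = ∑_{t=0}^{r} C(r,t) (1/2)^t [ℓ]^[t] x^{ℓ+t} y^{r−t}, where [ℓ]^[t] = ℓ(ℓ+1)···(ℓ+t−1) with [ℓ]^[0] = 1. -/

import Mathlib

lemma aux_yxl (k : Type*) [Field k]
    (S : Type*) [Ring S] [Algebra k S] (x y : S)
    (hrel : y * x = x * y + (2 : k)⁻¹ • x ^ 2) (ℓ : ℕ) :
    y * x ^ ℓ = x ^ ℓ * y + ((ℓ : k) * (2 : k)⁻¹) • x ^ (ℓ + 1) := by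
  induction ℓ with
  | zero => simp
  | succ n ih =>
    have h1 : y * x ^ (n + 1) = (y * x ^ n) * x := by rw [pow_succ, ← mul_assoc]
    rw [h1, ih, add_mul, smul_mul_assoc, mul_assoc, hrel, mul_add, mul_smul_comm,
      ← mul_assoc, ← pow_succ]
    have h2 : x ^ n * x ^ 2 = x ^ (n + 2) := by rw [← pow_add]
    have h3 : x ^ (n + 1) * x = x ^ (n + 2) := by rw [← pow_succ]
    rw [h2, h3, add_assoc, ← add_smul]
    congr 1
    push_cast
    ring

theorem stmt12' (k : Type*) [Field k]
    (S : Type*) [Ring S] [Algebra k S] (x y : S)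
    (hrel : y * x = x * y + (2 : k)⁻¹ • x ^ 2) (r ℓ : ℕ) :
    y ^ r * x ^ ℓ =
      ∑ t ∈ Finset.range (r + 1),
        ((r.choose t : k) * (2 : k)⁻¹ ^ t * (ℓ.ascFactorial t : k)) •
          (x ^ (ℓ + t) * y ^ (r - t)) := by
  induction r with
  | zero => simp
  | succ r ih =>
    have hL : y ^ (r + 1) * x ^ ℓ = y * (y ^ r * x ^ ℓ) := by
      rw [pow_succ', mul_assoc]
    rw [hL, ih, Finset.mul_sum]
    have hterm : ∀ t ∈ Finset.range (r + 1),
        y * (((r.choose t : k) * (2 : k)⁻¹ ^ t * (ℓ.ascFactorial t : k)) •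
          (x ^ (ℓ + t) * y ^ (r - t)))
        = ((r.choose t : k) * (2 : k)⁻¹ ^ t * (ℓ.ascFactorial t : k)) •
            (x ^ (ℓ + t) * y ^ (r + 1 - t))
          + ((r.choose t : k) * (2 : k)⁻¹ ^ t * (ℓ.ascFactorial t : k)
              * ((ℓ + t : ℕ) : k) * (2 : k)⁻¹) •
            (x ^ (ℓ + (t + 1)) * y ^ (r - t)) := by
      intro t ht
      rw [Finset.mem_range] at ht
      rw [mul_smul_comm, ← mul_assoc, aux_yxl k S x y hrel (ℓ + t), add_mul,
        smul_mul_assoc, mul_assoc (x ^ (ℓ + t)), ← pow_succ']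
      have hrt : r - t + 1 = r + 1 - t := by omega
      rw [hrt, smul_add, smul_smul]
      congr 2
      ring
    rw [Finset.sum_congr rfl hterm, Finset.sum_add_distrib]
    have hA : ∑ t ∈ Finset.range (r + 1),
        ((r.choose t : k) * (2 : k)⁻¹ ^ t * (ℓ.ascFactorial t : k)) •
          (x ^ (ℓ + t) * y ^ (r + 1 - t))
        = ∑ t ∈ Finset.range (r + 2),
        ((r.choose t : k) * (2 : k)⁻¹ ^ t * (ℓ.ascFactorial t : k)) •
          (x ^ (ℓ + t) * y ^ (r + 1 - t)) := by
      conv_rhs => rw [Finset.sum_range_succ]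
      rw [Nat.choose_succ_self]
      simp
    rw [hA, Finset.sum_range_succ'
      (fun t => ((r.choose t : k) * (2 : k)⁻¹ ^ t * (ℓ.ascFactorial t : k)) •
        (x ^ (ℓ + t) * y ^ (r + 1 - t))) (r + 1),
      Finset.sum_range_succ'
      (fun t => (((r + 1).choose t : k) * (2 : k)⁻¹ ^ t * (ℓ.ascFactorial t : k)) •
        (x ^ (ℓ + t) * y ^ (r + 1 - t))) (r + 1)]
    simp only [Nat.choose_zero_right, Nat.cast_one, pow_zero, Nat.ascFactorial_zero,
      Nat.add_zero, Nat.sub_zero]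
    rw [add_right_comm, ← Finset.sum_add_distrib]
    congr 1
    refine Finset.sum_congr rfl fun t ht => ?_
    rw [Finset.mem_range] at ht
    have h1 : r + 1 - (t + 1) = r - t := by omega
    rw [h1, ← add_smul]
    congr 1
    rw [Nat.choose_succ_succ, Nat.ascFactorial_succ]
    push_cast
    ring

/-- In `S = k⟨x,y⟩/(yx − xy − (1/2)x²)`:
`y^r x^ℓ = ∑_{t=0}^r C(r,t)(1/2)^t [ℓ]^[t] x^{ℓ+t} y^{r−t}`. -/
theorem stmt12 (k : Type*) [Field k] (p : ℕ) (hp : p.Prime) (hp2 : 2 < p) [CharP k p]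
    (S : Type*) [Ring S] [Algebra k S] (x y : S)
    (hrel : y * x = x * y + (2 : k)⁻¹ • x ^ 2) (r ℓ : ℕ) :
    y ^ r * x ^ ℓ =
      ∑ t ∈ Finset.range (r + 1),
        ((r.choose t : k) * (2 : k)⁻¹ ^ t * (ℓ.ascFactorial t : k)) •
          (x ^ (ℓ + t) * y ^ (r - t)) := by
  exact stmt12' k S x y hrel r ℓ
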